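/- Let f : ℝ → ℝ be C^{p+2} on (−∞, T] with f(T) = f'(T) = ⋯ = f^{(p)}(T) = 0, f^{(p+1)}(T) ≠ 0, and |f^{(p+2)}(t)| ≤ C|t| for all t ≤ T. Then as T → −∞ (with f = f_T possibly depending on T, uniformly satisfying the derivative bound), ∫_{−∞}^{T} e^{−t²} f(t) dt ∼ −e^{−T²} f^{(p+1)}(T)/(2T)^{p+2}, provided |f^{(p+1)}(T)| ≥ c|T| for some c > 0. -/

import Mathlib

open MeasureTheory Filter Set

noncomputable section
open Real
set_option maxHeartbeats 1000000


lemma gamma_int (m : ℕ) {a : ℝ} (ha : 0 < a) :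
    ∫ s in Ioi (0:ℝ), s ^ m * Real.exp (-(a * s)) = m.factorial / a ^ (m+1) := by
  have h := Real.integral_rpow_mul_exp_neg_mul_Ioi (a := (m+1 : ℝ)) (r := a) (by positivity) ha
  rw [Real.Gamma_nat_eq_factorial] at h
  rw [show ((m:ℝ)+1) - 1 = (m:ℝ) by ring] at h
  simp_rw [Real.rpow_natCast] at h
  rw [h, show ((m:ℝ)+1) = ((m+1 : ℕ):ℝ) by push_cast; ring, Real.rpow_natCast]
  field_simp
  rw [← mul_pow, one_div, inv_mul_cancel₀ ha.ne', one_pow]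

lemma gamma_integrable (m : ℕ) {a : ℝ} (ha : 0 < a) :
    IntegrableOn (fun s => s ^ m * Real.exp (-(a*s))) (Ioi (0:ℝ)) := by
  apply integrable_of_isBigO_exp_neg (half_pos ha) (by fun_prop)
  have h1 := (isLittleO_pow_exp_pos_mul_atTop m (half_pos ha)).isBigO
  have h2 := h1.mul (Asymptotics.isBigO_refl (fun x : ℝ => Real.exp (-(a*x))) atTop)
  refine h2.congr' (by rfl) ?_
  filter_upwards with x
  rw [← Real.exp_add]; ring_nf


lemma integral_comp_add_right_Ioi (a d : ℝ) (f : ℝ → ℝ) :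
    (∫ x in Ioi a, f (x + d)) = ∫ x in Ioi (a + d), f x := by
  have A : MeasurableEmbedding fun x : ℝ => x + d :=
    (Homeomorph.addRight d).isClosedEmbedding.measurableEmbedding
  have h := A.setIntegral_map (μ := volume) f (Ioi (a + d))
  rw [Measure.IsAddRightInvariant.map_add_right_eq_self (μ := (volume : Measure ℝ)) d] at h
  rw [show (fun x : ℝ => x + d) ⁻¹' Ioi (a + d) = Ioi a by ext x; simp] at h
  exact h.symm

lemma integral_Iic_comp_sub (T : ℝ) (f : ℝ → ℝ) :
    (∫ t in Iic T, f t) = ∫ s in Ioi (0:ℝ), f (T - s) := by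
  have h1 : (∫ t in Iic T, f t) = ∫ x in Ioi (-T), f (-x) := by
    rw [← integral_comp_neg_Iic]; simp
  have h2 := integral_comp_add_right_Ioi 0 (-T) (fun x => f (-x))
  rw [zero_add] at h2
  rw [h1, ← h2]
  refine setIntegral_congr_fun measurableSet_Ioi (fun x _ => ?_)
  simp [sub_eq_add_neg]


lemma ftc_Iic {T : ℝ} {φ ψ : ℝ → ℝ}
    (hφ : ∀ x ∈ Iic T, HasDerivWithinAt φ (ψ x) (Iic T) x)
    (hψ : ContinuousOn ψ (Iic T)) {t : ℝ} (ht : t ≤ T) :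
    φ T - φ t = ∫ s in t..T, ψ s := by
  have hIcc : Icc t T ⊆ Iic T := Icc_subset_Iic_self
  refine (intervalIntegral.integral_eq_sub_of_hasDeriv_right_of_le ht ?_ ?_ ?_).symm
  · exact fun x hx => ((hφ x (hIcc hx)).continuousWithinAt).mono hIcc
  · intro x hx
    exact ((hφ x (le_of_lt hx.2)).hasDerivAt (Iic_mem_nhds hx.2)).hasDerivWithinAt
  · exact (hψ.mono (by rw [uIcc_of_le ht]; exact hIcc)).intervalIntegrable

lemma hasDeriv_iter {T : ℝ} {g : ℝ → ℝ} {n : ℕ} (hg : ContDiffOn ℝ (n:ℕ∞) g (Iic T))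
    {k : ℕ} (hk : k < n) :
    ∀ x ∈ Iic T, HasDerivWithinAt (iteratedDerivWithin k g (Iic T))
      (iteratedDerivWithin (k+1) g (Iic T) x) (Iic T) x := by
  intro x hx
  have hd := hg.differentiableOn_iteratedDerivWithin (m := k)
    (by exact_mod_cast hk) (uniqueDiffOn_Iic T)
  have h2 := (hd x hx).hasDerivWithinAt
  rw [iteratedDerivWithin_succ]
  exact h2

lemma int_pow (t T : ℝ) (k : ℕ) :
    ∫ s in t..T, (T-s)^k = (T-t)^(k+1)/(k+1) := by
  have hd : ∀ s : ℝ, HasDerivAt (fun s => -((T-s)^(k+1))/(k+1)) ((T-s)^k) s := by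
    intro s
    have h1 : HasDerivAt (fun s : ℝ => T - s) (-1) s := (hasDerivAt_id s).const_sub T
    have h2 := (h1.fun_pow (k+1)).neg.div_const ((k:ℝ)+1)
    refine h2.congr_deriv ?_
    have : ((k:ℝ)+1) ≠ 0 := by positivity
    field_simp
    rw [Nat.add_sub_cancel]; push_cast; ring
  rw [intervalIntegral.integral_eq_sub_of_hasDerivAt (fun x _ => hd x)
    ((Continuous.continuousOn (by fun_prop)).intervalIntegrable)]
  have : ((k:ℝ)+1) ≠ 0 := by positivity
  field_simp
  simp

lemma taylor_bound {p : ℕ} {T C : ℝ} {g : ℝ → ℝ} (hT : T ≤ 0) (hC : 0 ≤ C)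
    (hg : ContDiffOn ℝ ((p+2 : ℕ) : ℕ∞) g (Iic T))
    (hvan : ∀ j : ℕ, j ≤ p → iteratedDerivWithin j g (Iic T) T = 0)
    (hb : ∀ t : ℝ, t ≤ T → |iteratedDerivWithin (p+2) g (Iic T) t| ≤ C * |t|) :
    ∀ m : ℕ, m ≤ p + 1 → ∀ t : ℝ, t ≤ T →
      |iteratedDerivWithin (p+1-m) g (Iic T) t
        - iteratedDerivWithin (p+1) g (Iic T) T * (t-T)^m / (m.factorial : ℝ)|
      ≤ C * |t| * (T-t)^(m+1) / ((m+1).factorial : ℝ) := by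
  intro m
  induction m with
  | zero =>
    intro _ t ht
    have key := ftc_Iic (φ := iteratedDerivWithin (p+1) g (Iic T))
      (ψ := iteratedDerivWithin (p+2) g (Iic T))
      (fun x hx => by
        have := hasDeriv_iter hg (k := p+1) (by omega) x hx
        rwa [show p+1+1 = p+2 from rfl] at this)
      (hg.continuousOn_iteratedDerivWithin le_rfl (uniqueDiffOn_Iic T)) ht
    have h1 : iteratedDerivWithin (p+1-0) g (Iic T) t
        - iteratedDerivWithin (p+1) g (Iic T) T * (t-T)^0 / ((0:ℕ).factorial : ℝ)
        = -(∫ s in t..T, iteratedDerivWithin (p+2) g (Iic T) s) := by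
      rw [← key]; simp [Nat.factorial]
    rw [h1, abs_neg]
    have hbb : ∀ x ∈ Set.uIoc t T, ‖iteratedDerivWithin (p+2) g (Iic T) x‖ ≤ C * |t| := by
      intro x hx
      rw [Set.uIoc_of_le ht] at hx
      refine (hb x hx.2).trans (mul_le_mul_of_nonneg_left ?_ hC)
      rw [abs_of_nonpos (hx.2.trans hT), abs_of_nonpos (ht.trans hT)]
      linarith [hx.1]
    have h2 := intervalIntegral.norm_integral_le_of_norm_le_const hbb
    rw [Real.norm_eq_abs] at h2
    refine h2.trans (le_of_eq ?_)
    rw [abs_of_nonneg (by linarith : (0:ℝ) ≤ T - t)]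
    simp [Nat.factorial]
  | succ m ih =>
    intro hm t ht
    have hm' : m ≤ p := by omega
    set A := iteratedDerivWithin (p+1) g (Iic T) T with hA
    set φ : ℝ → ℝ := fun x => iteratedDerivWithin (p-m) g (Iic T) x
      - A * (x-T)^(m+1) / ((m+1).factorial : ℝ) with hφ
    set ψ : ℝ → ℝ := fun x => iteratedDerivWithin (p+1-m) g (Iic T) x
      - A * (x-T)^m / (m.factorial : ℝ) with hψ
    have hφψ : ∀ x ∈ Iic T, HasDerivWithinAt φ (ψ x) (Iic T) x := by
      intro x hx
      have h1 := hasDeriv_iter hg (k := p-m) (by omega) x hx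
      rw [show p-m+1 = p+1-m by omega] at h1
      have h2 : HasDerivAt (fun x : ℝ => A * (x-T)^(m+1) / ((m+1).factorial : ℝ))
          (A * (x-T)^m / (m.factorial : ℝ)) x := by
        have hx1 : HasDerivAt (fun x : ℝ => x - T) 1 x := (hasDerivAt_id x).sub_const T
        have h3 := ((hx1.fun_pow (m+1)).const_mul A).div_const ((m+1).factorial : ℝ)
        refine h3.congr_deriv ?_
        have h0 : (((m+1).factorial :ℕ) : ℝ) = ((m:ℝ)+1) * (m.factorial : ℝ) := by
          rw [Nat.factorial_succ]; push_cast; ring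
        rw [h0]
        have hf0 : (m.factorial : ℝ) ≠ 0 := by positivity
        have hm0 : ((m:ℝ)+1) ≠ 0 := by positivity
        rw [Nat.add_sub_cancel]; push_cast
        field_simp
      exact h1.sub h2.hasDerivWithinAt
    have hψc : ContinuousOn ψ (Iic T) := by
      refine ContinuousOn.sub ?_ (Continuous.continuousOn (by fun_prop))
      exact hg.continuousOn_iteratedDerivWithin
        (by exact_mod_cast Nat.cast_le.mpr (by omega : p+1-m ≤ p+2)) (uniqueDiffOn_Iic T)
    have hφT : φ T = 0 := by
      simp [hφ, hvan (p-m) (by omega)]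
    have key := ftc_Iic hφψ hψc ht
    rw [hφT] at key
    have h5 : φ t = -(∫ s in t..T, ψ s) := by linarith
    have hψb : ∀ s ∈ Icc t T, |ψ s| ≤ C * |t| * (T-s)^(m+1) / ((m+1).factorial : ℝ) := by
      intro s hs
      refine (ih (by omega) s hs.2).trans ?_
      have habs : |s| ≤ |t| := by
        rw [abs_of_nonpos (hs.2.trans hT), abs_of_nonpos (ht.trans hT)]
        linarith [hs.1]
      have hnum : C * |s| * (T-s)^(m+1) ≤ C * |t| * (T-s)^(m+1) :=
        mul_le_mul_of_nonneg_right (mul_le_mul_of_nonneg_left habs hC)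
          (pow_nonneg (by linarith [hs.2] : (0:ℝ) ≤ T - s) _)
      exact div_le_div_of_nonneg_right hnum (by positivity)
    have h6 : |∫ s in t..T, ψ s| ≤ ∫ s in t..T, C * |t| * (T-s)^(m+1) / ((m+1).factorial : ℝ) := by
      have h7 := intervalIntegral.norm_integral_le_integral_norm (f := ψ) (μ := volume) ht
      rw [Real.norm_eq_abs] at h7
      refine h7.trans ?_
      refine intervalIntegral.integral_mono_on ht ?_ ?_ ?_
      · exact ((hψc.mono (by rw [uIcc_of_le ht] at *; exact Icc_subset_Iic_self)).norm).intervalIntegrable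
      · exact (Continuous.continuousOn (by fun_prop)).intervalIntegrable
      · intro x hx; rw [Real.norm_eq_abs]; exact hψb x hx
    have h8 : (∫ s in t..T, C * |t| * (T-s)^(m+1) / ((m+1).factorial : ℝ))
        = C * |t| * (T-t)^(m+2) / (((m+1):ℝ)+1) / ((m+1).factorial : ℝ) := by
      have he : ∀ s : ℝ, C * |t| * (T-s)^(m+1) / ((m+1).factorial : ℝ)
          = (C * |t| / ((m+1).factorial : ℝ)) * (T-s)^(m+1) := fun s => by ring
      simp_rw [he]
      rw [intervalIntegral.integral_const_mul, int_pow]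
      push_cast
      ring
    rw [show p+1-(m+1) = p-m from by omega]
    have hgoal : iteratedDerivWithin (p-m) g (Iic T) t
        - A * (t-T)^(m+1) / ((m+1).factorial : ℝ) = φ t := rfl
    rw [hgoal, h5, abs_neg]
    refine h6.trans ?_
    rw [h8]
    have h9 : (((m+1+1).factorial : ℕ) : ℝ) = (((m:ℝ)+1)+1) * ((m+1).factorial : ℝ) := by
      rw [Nat.factorial_succ]; push_cast; ring
    rw [h9]
    have hf0 : ((m+1).factorial : ℝ) ≠ 0 := by positivity
    have hm0 : ((m:ℝ)+1+1) ≠ 0 := by positivity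
    rw [div_div]

lemma main_est {p : ℕ} {C c T : ℝ} {g : ℝ → ℝ} (hC : 0 < C) (hc : 0 < c) (hT : T ≤ -1)
    (hg : ContDiffOn ℝ ((p+2 : ℕ) : ℕ∞) g (Iic T))
    (hvan : ∀ j : ℕ, j ≤ p → iteratedDerivWithin j g (Iic T) T = 0)
    (hb : ∀ t : ℝ, t ≤ T → |iteratedDerivWithin (p+2) g (Iic T) t| ≤ C * |t|)
    (hlow : c * |T| ≤ |iteratedDerivWithin (p+1) g (Iic T) T|) :
    |(∫ t in Iic T, Real.exp (-t^2) * g t) /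
        (-(Real.exp (-T^2)) * iteratedDerivWithin (p+1) g (Iic T) T / (2*T)^(p+2)) - 1|
      ≤ 2*C/(c*(-2*T))*(1/2 + ((p:ℝ)+3)/(-2*T)^2) + ((p:ℝ)+2)*((p:ℝ)+3)/(-2*T)^2 := by
  have hT0 : T ≤ 0 := hT.trans (by norm_num)
  set a : ℝ := -2*T with ha_def
  have ha : 0 < a := by simp only [ha_def]; nlinarith
  set A : ℝ := iteratedDerivWithin (p+1) g (Iic T) T with hA_def
  have hTabs : |T| = a/2 := by rw [abs_of_nonpos hT0]; simp [ha_def]; ring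
  have hAlow : c * (a/2) ≤ |A| := by rw [← hTabs]; exact hlow
  have hApos : 0 < |A| := lt_of_lt_of_le (by positivity) hAlow
  have hAne : A ≠ 0 := fun h => by simp [h] at hApos
  have hfac1 : (0:ℝ) < ((p+1).factorial : ℝ) := by positivity
  have hfac2 : (0:ℝ) < ((p+2).factorial : ℝ) := by positivity
  -- Taylor estimate, rewritten
  have htay : ∀ s : ℝ, 0 ≤ s →
      |(-1:ℝ)^(p+1) * g (T-s) - A * s^(p+1) / ((p+1).factorial : ℝ)|
        ≤ C * (a/2+s) * s^(p+2) / ((p+2).factorial : ℝ) := by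
    intro s hs
    have h1 := taylor_bound hT0 hC.le hg hvan hb (p+1) le_rfl (T-s) (by linarith)
    rw [show p+1-(p+1) = 0 from by omega, iteratedDerivWithin_zero] at h1
    have h2 : |T-s| = a/2 + s := by
      rw [abs_of_nonpos (by linarith)]; simp [ha_def]; ring
    rw [h2, show T-(T-s) = s from by ring] at h1
    rw [show p+1+1 = p+2 from rfl] at h1
    have h3 : (T-s-T) = -s := by ring
    rw [h3] at h1
    have h4 : (-1:ℝ)^(p+1) * g (T-s) - A * s^(p+1) / ((p+1).factorial : ℝ)
        = (-1:ℝ)^(p+1) * (g (T-s) - A * (-s)^(p+1) / ((p+1).factorial : ℝ)) := by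
      have h5 : (-s:ℝ)^(p+1) = (-1:ℝ)^(p+1) * s^(p+1) := by
        rw [neg_pow]
      have h6 : ((-1:ℝ)^(p+1)) * ((-1:ℝ)^(p+1)) = 1 := by
        rw [← pow_add]; exact Even.neg_one_pow ⟨p+1, by ring⟩
      rw [h5]
      linear_combination (A * s^(p+1) / (((p+1).factorial : ℕ):ℝ)) * h6
    rw [h4, abs_mul, abs_pow, abs_neg, abs_one, one_pow, one_mul]
    exact h1
  -- the integral rewritten
  set u : ℝ → ℝ := fun s => Real.exp (-(a*s)) * Real.exp (-s^2) with hu_def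
  have hu_pos : ∀ s : ℝ, 0 < u s := fun s => by positivity
  have hu_le : ∀ s : ℝ, u s ≤ Real.exp (-(a*s)) := by
    intro s
    have : Real.exp (-s^2) ≤ 1 := Real.exp_le_one_iff.mpr (neg_nonpos.mpr (by positivity))
    calc u s ≤ Real.exp (-(a*s)) * 1 := by
            exact mul_le_mul_of_nonneg_left this (Real.exp_pos _).le
      _ = _ := by ring
  -- measurability
  have hgc : ContinuousOn (fun s : ℝ => g (T-s)) (Ioi 0) := by
    refine (hg.continuousOn).comp (Continuous.continuousOn (by fun_prop)) ?_
    intro s hs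
    simp only [mem_Iic]
    have : (0:ℝ) < s := hs
    linarith
  have hmeas : AEStronglyMeasurable (fun s => u s * ((-1:ℝ)^(p+1) * g (T-s)))
      (volume.restrict (Ioi (0:ℝ))) := by
    refine ContinuousOn.aestronglyMeasurable ?_ measurableSet_Ioi
    exact (Continuous.continuousOn (by fun_prop)).mul (continuousOn_const.mul hgc)
  have iW : ∀ m : ℕ, IntegrableOn (fun s => s ^ m * Real.exp (-(a*s))) (Ioi (0:ℝ)) :=
    fun m => gamma_integrable m ha
  have habs_g : ∀ s ∈ Ioi (0:ℝ), ‖u s * ((-1:ℝ)^(p+1) * g (T-s))‖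
      ≤ |A| / ((p+1).factorial:ℝ) * (s^(p+1) * Real.exp (-(a*s)))
        + C*(a/2) / ((p+2).factorial:ℝ) * (s^(p+2) * Real.exp (-(a*s)))
        + C / ((p+2).factorial:ℝ) * (s^(p+3) * Real.exp (-(a*s))) := by
    intro s hs
    have hs0 : (0:ℝ) ≤ s := le_of_lt hs
    have h1 := htay s hs0
    have h2 : |(-1:ℝ)^(p+1) * g (T-s)| ≤ |A| * s^(p+1) / ((p+1).factorial:ℝ)
        + C * (a/2+s) * s^(p+2) / ((p+2).factorial:ℝ) := by
      have h3 := abs_sub_abs_le_abs_sub ((-1:ℝ)^(p+1) * g (T-s))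
        (A * s^(p+1) / ((p+1).factorial:ℝ))
      have h4 : |A * s^(p+1) / (((p+1).factorial:ℕ):ℝ)| = |A| * s^(p+1) / ((p+1).factorial:ℝ) := by
        rw [abs_div, abs_mul, abs_pow, abs_of_nonneg hs0, Nat.abs_cast]
      have h5 := h3.trans h1
      rw [h4] at h3
      linarith
    calc ‖u s * ((-1:ℝ)^(p+1) * g (T-s))‖ = u s * |(-1:ℝ)^(p+1) * g (T-s)| := by
          rw [norm_mul, Real.norm_eq_abs, Real.norm_eq_abs, abs_of_pos (hu_pos s)]
      _ ≤ Real.exp (-(a*s)) * (|A| * s^(p+1) / ((p+1).factorial:ℝ)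
          + C * (a/2+s) * s^(p+2) / ((p+2).factorial:ℝ)) := by
          refine mul_le_mul (hu_le s) h2 (abs_nonneg _) (Real.exp_pos _).le
      _ = _ := by rw [pow_succ s (p+2)]; ring
  have hDom : IntegrableOn (fun s => |A| / ((p+1).factorial:ℝ) * (s^(p+1) * Real.exp (-(a*s)))
        + C*(a/2) / ((p+2).factorial:ℝ) * (s^(p+2) * Real.exp (-(a*s)))
        + C / ((p+2).factorial:ℝ) * (s^(p+3) * Real.exp (-(a*s)))) (Ioi (0:ℝ)) :=
    (((iW (p+1)).const_mul _).add ((iW (p+2)).const_mul _)).add ((iW (p+3)).const_mul _)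
  have hInt1 : IntegrableOn (fun s => u s * ((-1:ℝ)^(p+1) * g (T-s))) (Ioi (0:ℝ)) := by
    refine Integrable.mono' hDom hmeas ?_
    exact (ae_restrict_iff' measurableSet_Ioi).mpr (Filter.Eventually.of_forall habs_g)
  have hInt2 : IntegrableOn (fun s => s^(p+1) * u s) (Ioi (0:ℝ)) := by
    refine Integrable.mono' (iW (p+1)) ((Continuous.aestronglyMeasurable (by fun_prop)).restrict) ?_
    refine (ae_restrict_iff' measurableSet_Ioi).mpr (Filter.Eventually.of_forall ?_)
    intro s hs
    have hs0 : (0:ℝ) ≤ s := le_of_lt hs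
    rw [Real.norm_eq_abs, abs_mul, abs_pow, abs_of_nonneg hs0, abs_of_pos (hu_pos s)]
    exact mul_le_mul_of_nonneg_left (hu_le s) (pow_nonneg hs0 _)
  set J : ℝ := ∫ s in Ioi (0:ℝ), u s * ((-1:ℝ)^(p+1) * g (T-s)) with hJ_def
  set V : ℝ := ∫ s in Ioi (0:ℝ), s^(p+1) * u s with hV_def
  have hB1 : |J - A / ((p+1).factorial:ℝ) * V|
      ≤ C*(a/2) / ((p+2).factorial:ℝ) * (((p+2).factorial:ℝ)/a^(p+3))
        + C / ((p+2).factorial:ℝ) * (((p+3).factorial:ℝ)/a^(p+4)) := by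
    rw [hJ_def, hV_def, ← integral_const_mul, ← integral_sub hInt1 (hInt2.const_mul _)]
    have hn := norm_integral_le_integral_norm (μ := volume.restrict (Ioi (0:ℝ)))
      (f := fun s => u s * ((-1:ℝ)^(p+1) * g (T-s)) - A / ((p+1).factorial:ℝ) * (s^(p+1) * u s))
    rw [Real.norm_eq_abs] at hn
    refine hn.trans ?_
    have hmono : (∫ s in Ioi (0:ℝ), ‖u s * ((-1:ℝ)^(p+1) * g (T-s))
          - A / ((p+1).factorial:ℝ) * (s^(p+1) * u s)‖)
        ≤ ∫ s in Ioi (0:ℝ), (C*(a/2) / ((p+2).factorial:ℝ) * (s^(p+2) * Real.exp (-(a*s)))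
          + C / ((p+2).factorial:ℝ) * (s^(p+3) * Real.exp (-(a*s)))) := by
      refine setIntegral_mono_on ((hInt1.sub (hInt2.const_mul _)).norm)
        (((iW (p+2)).const_mul _).add ((iW (p+3)).const_mul _)) measurableSet_Ioi ?_
      intro s hs
      have hs0 : (0:ℝ) ≤ s := le_of_lt hs
      have he : u s * ((-1:ℝ)^(p+1) * g (T-s)) - A / ((p+1).factorial:ℝ) * (s^(p+1) * u s)
          = u s * ((-1:ℝ)^(p+1) * g (T-s) - A * s^(p+1) / ((p+1).factorial:ℝ)) := by ring
      rw [he, Real.norm_eq_abs, abs_mul, abs_of_pos (hu_pos s)]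
      calc u s * |(-1:ℝ)^(p+1) * g (T-s) - A * s^(p+1) / ((p+1).factorial:ℝ)|
          ≤ Real.exp (-(a*s)) * (C * (a/2+s) * s^(p+2) / ((p+2).factorial:ℝ)) :=
            mul_le_mul (hu_le s) (htay s hs0) (abs_nonneg _) (Real.exp_pos _).le
        _ = _ := by rw [pow_succ s (p+2)]; ring
    refine hmono.trans (le_of_eq ?_)
    rw [MeasureTheory.integral_add ((iW (p+2)).const_mul _) ((iW (p+3)).const_mul _),
      integral_const_mul, integral_const_mul, gamma_int (p+2) ha, gamma_int (p+3) ha]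
  have hB2 : |((p+1).factorial:ℝ)/a^(p+2) - V| ≤ ((p+3).factorial:ℝ)/a^(p+4) := by
    have hg1 : ((p+1).factorial:ℝ)/a^(p+2)
        = ∫ s in Ioi (0:ℝ), s^(p+1) * Real.exp (-(a*s)) := (gamma_int (p+1) ha).symm
    rw [hg1, hV_def, ← integral_sub (iW (p+1)) hInt2]
    have hnn : ∀ s ∈ Ioi (0:ℝ), 0 ≤ s^(p+1) * Real.exp (-(a*s)) - s^(p+1) * u s := by
      intro s hs
      have hs0 : (0:ℝ) ≤ s := le_of_lt hs
      have := mul_le_mul_of_nonneg_left (hu_le s) (pow_nonneg hs0 (p+1))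
      linarith
    rw [abs_of_nonneg (setIntegral_nonneg measurableSet_Ioi hnn)]
    have hmono : (∫ s in Ioi (0:ℝ), (s^(p+1) * Real.exp (-(a*s)) - s^(p+1) * u s))
        ≤ ∫ s in Ioi (0:ℝ), s^(p+3) * Real.exp (-(a*s)) := by
      refine setIntegral_mono_on ((iW (p+1)).sub hInt2) (iW (p+3)) measurableSet_Ioi ?_
      intro s hs
      have hs0 : (0:ℝ) ≤ s := le_of_lt hs
      have hexp1 : 1 - Real.exp (-s^2) ≤ s^2 := by
        have := Real.add_one_le_exp (-s^2)
        linarith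
      have hs13 : s^(p+3) = s^(p+1) * s^2 := by rw [← pow_add]
      have hpe : (0:ℝ) ≤ s^(p+1) * Real.exp (-(a*s)) :=
        mul_nonneg (pow_nonneg hs0 _) (Real.exp_pos _).le
      have hfe : s^(p+1) * Real.exp (-(a*s)) - s^(p+1) * u s
          = s^(p+1) * Real.exp (-(a*s)) * (1 - Real.exp (-s^2)) := by
        rw [hu_def]; ring
      rw [hfe, hs13]
      calc s^(p+1) * Real.exp (-(a*s)) * (1 - Real.exp (-s^2))
          ≤ s^(p+1) * Real.exp (-(a*s)) * s^2 := mul_le_mul_of_nonneg_left hexp1 hpe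
        _ = s^(p+1) * s^2 * Real.exp (-(a*s)) := by ring
    refine hmono.trans (le_of_eq ?_)
    rw [gamma_int (p+3) ha]
  have h6 : ((-1:ℝ)^(p+1)) * ((-1:ℝ)^(p+1)) = 1 := by
    rw [← pow_add]; exact Even.neg_one_pow ⟨p+1, by ring⟩
  have hm1 : ((-1:ℝ)^(p+1)) ≠ 0 := pow_ne_zero _ (by norm_num)
  have hane : a ≠ 0 := ne_of_gt ha
  have hapne : a^(p+2) ≠ 0 := pow_ne_zero _ hane
  have hI : (∫ t in Iic T, Real.exp (-t^2) * g t)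
      = Real.exp (-T^2) * ((-1:ℝ)^(p+1) * J) := by
    rw [integral_Iic_comp_sub T (fun t => Real.exp (-t^2) * g t),
      show Real.exp (-T^2) * ((-1:ℝ)^(p+1)*J) = (Real.exp (-T^2)*(-1:ℝ)^(p+1)) * J from by ring,
      hJ_def, ← integral_const_mul]
    refine setIntegral_congr_fun measurableSet_Ioi (fun s hs => ?_)
    have hexp : Real.exp (-(T-s)^2) = Real.exp (-T^2) * (Real.exp (-(a*s)) * Real.exp (-s^2)) := by
      rw [← Real.exp_add, ← Real.exp_add]
      congr 1
      rw [ha_def]; ring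
    show Real.exp (-(T-s)^2) * g (T-s)
        = (Real.exp (-T^2) * (-1:ℝ)^(p+1)) * (u s * ((-1:ℝ)^(p+1) * g (T-s)))
    rw [hexp, hu_def]
    linear_combination (-(Real.exp (-T^2) * (Real.exp (-(a*s)) * Real.exp (-s^2)) * g (T-s))) * h6
  have hps : ((-1:ℝ))^(p*2) = 1 := Even.neg_one_pow ⟨p, by ring⟩
  have hD : -(Real.exp (-T^2)) * A / (2*T)^(p+2)
      = (-1:ℝ)^(p+1) * Real.exp (-T^2) * A / a^(p+2) := by
    have h2T : (2*T) = -a := by rw [ha_def]; ring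
    rw [h2T, neg_pow, pow_succ (-1:ℝ) (p+1)]
    field_simp
    ring_nf
    rw [hps]
  have hfrac : Real.exp (-T^2) * ((-1:ℝ)^(p+1) * J)
        / ((-1:ℝ)^(p+1) * Real.exp (-T^2) * A / a^(p+2)) - 1
      = (J - A/a^(p+2)) * (a^(p+2)/A) := by
    rw [div_div_eq_mul_div]
    field_simp
  rw [hI, hD, hfrac, abs_mul]
  have habsr : |a^(p+2)/A| = a^(p+2)/|A| := by
    rw [abs_div, abs_pow, abs_of_pos ha]
  rw [habsr]
  have hfac32 : ((p+3).factorial:ℝ) = ((p:ℝ)+3) * ((p+2).factorial:ℝ) := by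
    rw [show p+3 = (p+2)+1 from rfl, Nat.factorial_succ]; push_cast; ring
  have hfac3 : ((p+3).factorial:ℝ) = ((p:ℝ)+3)*((p:ℝ)+2)*((p+1).factorial:ℝ) := by
    rw [hfac32, show p+2 = (p+1)+1 from rfl, Nat.factorial_succ]; push_cast; ring
  have hsplit : J - A/a^(p+2) = (J - A/((p+1).factorial:ℝ) * V)
      + -((A/((p+1).factorial:ℝ)) * (((p+1).factorial:ℝ)/a^(p+2) - V)) := by
    field_simp
    ring
  have hx2 : C*(a/2)/((p+2).factorial:ℝ)*(((p+2).factorial:ℝ)/a^(p+3))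
      + C/((p+2).factorial:ℝ)*(((p+3).factorial:ℝ)/a^(p+4))
      = C*(a/2)/a^(p+3) + C*((p:ℝ)+3)/a^(p+4) := by
    rw [hfac32]
    field_simp
  have hy : |(A/((p+1).factorial:ℝ)) * (((p+1).factorial:ℝ)/a^(p+2) - V)|
      ≤ (|A|/((p+1).factorial:ℝ)) * (((p+3).factorial:ℝ)/a^(p+4)) := by
    rw [abs_mul, abs_div, Nat.abs_cast]
    exact mul_le_mul_of_nonneg_left hB2 (by positivity)
  have hJA : |J - A/a^(p+2)| ≤ (C*(a/2)/a^(p+3) + C*((p:ℝ)+3)/a^(p+4))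
      + (|A|/((p+1).factorial:ℝ)) * (((p+3).factorial:ℝ)/a^(p+4)) := by
    rw [hsplit]
    refine (abs_add_le _ _).trans ?_
    rw [abs_neg]
    rw [hx2] at hB1
    linarith [hB1, hy]
  refine le_trans (mul_le_mul_of_nonneg_right hJA (by positivity)) ?_
  have hp3 : a^(p+3) = a^(p+2)*a := pow_succ a (p+2)
  have hp4 : a^(p+4) = a^(p+2)*a^2 := by rw [← pow_add]
  have hApinv : 1/|A| ≤ 2/(c*a) := by
    rw [div_le_div_iff₀ hApos (by positivity)]
    linarith [hAlow]
  have hEq : ((C*(a/2)/a^(p+3) + C*((p:ℝ)+3)/a^(p+4))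
      + (|A|/((p+1).factorial:ℝ)) * (((p+3).factorial:ℝ)/a^(p+4))) * (a^(p+2)/|A|)
      = (C/2 + C*((p:ℝ)+3)/a^2) * (1/|A|) + ((p:ℝ)+2)*((p:ℝ)+3)/a^2 := by
    rw [hfac3, hp3, hp4]
    field_simp
  rw [hEq]
  have h1 : (C/2 + C*((p:ℝ)+3)/a^2) * (1/|A|) ≤ (C/2 + C*((p:ℝ)+3)/a^2) * (2/(c*a)) :=
    mul_le_mul_of_nonneg_left hApinv (by positivity)
  have h2 : (C/2 + C*((p:ℝ)+3)/a^2) * (2/(c*a)) = 2*C/(c*a)*(1/2 + ((p:ℝ)+3)/a^2) := by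
    field_simp
  linarith [h1, h2]


theorem stmt_11 (p : ℕ) (f : ℝ → ℝ → ℝ) (C c : ℝ) (hC : 0 < C) (hc : 0 < c)
    (hreg : ∀ T : ℝ, ContDiffOn ℝ (p + 2) (f T) (Iic T))
    (hvanish : ∀ T : ℝ, ∀ j : ℕ, j ≤ p → iteratedDerivWithin j (f T) (Iic T) T = 0)
    (hbound : ∀ T : ℝ, ∀ t : ℝ, t ≤ T →
      |iteratedDerivWithin (p + 2) (f T) (Iic T) t| ≤ C * |t|)
    (hlower : ∀ T : ℝ, c * |T| ≤ |iteratedDerivWithin (p + 1) (f T) (Iic T) T|) :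
    Tendsto (fun T : ℝ =>
        (∫ t in Iic T, Real.exp (-t ^ 2) * f T t) /
          (-(Real.exp (-T ^ 2)) * iteratedDerivWithin (p + 1) (f T) (Iic T) T
            / (2 * T) ^ (p + 2)))
      atBot (nhds 1) := by
  have h1 : Tendsto (fun T : ℝ => -2*T) atBot atTop := by
    have h0 : Tendsto (fun x : ℝ => -x) atBot atTop := tendsto_neg_atBot_atTop
    have h2 := h0.const_mul_atTop (show (0:ℝ) < 2 by norm_num)
    exact h2.congr (fun x => by ring)
  have k1 : Tendsto (fun a:ℝ => a⁻¹) atTop (nhds 0) := tendsto_inv_atTop_zero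
  have k2 : Tendsto (fun a:ℝ => (a^2)⁻¹) atTop (nhds 0) := by
    have h3 : Tendsto (fun a:ℝ => a^2) atTop atTop := tendsto_pow_atTop two_ne_zero
    exact h3.inv_tendsto_atTop
  have hF : Tendsto (fun a : ℝ => 2*C/c*a⁻¹*(1/2 + ((p:ℝ)+3)*(a^2)⁻¹)
      + ((p:ℝ)+2)*((p:ℝ)+3)*(a^2)⁻¹) atTop (nhds 0) := by
    have l1 := (k1.const_mul (2*C/c)).mul ((k2.const_mul ((p:ℝ)+3)).const_add (1/2))
    have l2 := k2.const_mul (((p:ℝ)+2)*((p:ℝ)+3))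
    have l3 := l1.add l2
    simpa using l3
  have hE : Tendsto (fun T : ℝ => 2*C/(c*(-2*T))*(1/2 + ((p:ℝ)+3)/(-2*T)^2)
      + ((p:ℝ)+2)*((p:ℝ)+3)/(-2*T)^2) atBot (nhds 0) := by
    refine Tendsto.congr (fun T => ?_) (hF.comp h1)
    show 2*C/c*(-2*T)⁻¹*(1/2 + ((p:ℝ)+3)*((-2*T)^2)⁻¹) + ((p:ℝ)+2)*((p:ℝ)+3)*((-2*T)^2)⁻¹
        = _
    rw [div_eq_mul_inv (2*C) (c*(-2*T)), mul_inv]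
    rw [div_eq_mul_inv (((p:ℝ)+3)) ((-2*T)^2), div_eq_mul_inv (((p:ℝ)+2)*((p:ℝ)+3)) ((-2*T)^2)]
    ring
  rw [tendsto_iff_dist_tendsto_zero]
  refine squeeze_zero' (Filter.Eventually.of_forall (fun T => dist_nonneg)) ?_ hE
  filter_upwards [eventually_le_atBot (-1:ℝ)] with T hT
  rw [Real.dist_eq]
  have hreg' : ContDiffOn ℝ ((p+2 : ℕ) : ℕ∞) (f T) (Iic T) := by
    have := hreg T
    have he : (((p+2 : ℕ) : ℕ∞) : WithTop ℕ∞) = ((p : WithTop ℕ∞) + 2) := by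
      push_cast
      rw [show ((2:ℕ∞) : WithTop ℕ∞) = (2 : WithTop ℕ∞) from rfl, add_comm]
    rw [he]
    exact this
  exact main_est hC hc hT hreg' (fun j hj => hvanish T j hj)
    (fun t ht => hbound T t ht) (hlower T)
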